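/- Let f : ℝⁿ → ℝ ∪ {±∞} be finite at x̄ and h ∈ ℝⁿ, and assume f is calm at x̄ in direction h. Then ∂_a f(x̄; h) = ⋃_{ν ∈ Df(x̄)(h)} ∂f(x̄; (h, ν)) = {x* : (x*, −1) ∈ ⋃_{ν ∈ Df(x̄)(h)} N_{epi f}((x̄, f(x̄)); (h, ν))}. If, in addition, f is directionally differentiable at x̄ in direction h, then Df(x̄)(h) = {f′(x̄; h)} and ∂_a f(x̄; h) = ∂f(x̄; (h, f′(x̄; h))). -/

import Mathlib

open Filter Topology Set Pointwise

noncomputable section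

namespace Paper

variable {E : Type*} [NormedAddCommGroup E] [InnerProductSpace ℝ E]
variable {F : Type*} [NormedAddCommGroup F] [InnerProductSpace ℝ F]

/-- The set `V_{ρ,δ}(u)`. -/
def dirNbhdBase (u : E) (ρ δ : ℝ) : Set E :=
  {z | ‖z‖ ≤ ρ ∧ ‖‖u‖ • z - ‖z‖ • u‖ ≤ δ * ‖z‖ * ‖u‖}

/-- `V` is a directional neighborhood of the direction `u`. -/
def IsDirNbhd (V : Set E) (u : E) : Prop :=
  ∃ ρ > (0:ℝ), ∃ δ > (0:ℝ), dirNbhdBase u ρ δ ⊆ V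

/-- Tangent (contingent/Bouligand) cone to `Ω` at `x`. -/
def tangentCone (Ω : Set E) (x : E) : Set E :=
  {u | ∃ (uk : ℕ → E) (tk : ℕ → ℝ), Tendsto uk atTop (𝓝 u) ∧ (∀ k, 0 < tk k) ∧
    Tendsto tk atTop (𝓝 0) ∧ ∀ k, x + tk k • uk k ∈ Ω}

/-- Fréchet (regular) normal cone to `Ω` at `x` (empty if `x ∉ Ω`). -/
def frechetNC (Ω : Set E) (x : E) : Set E :=
  {ξ | x ∈ Ω ∧ ∀ ε > (0:ℝ), ∀ᶠ y in 𝓝[Ω] x, (inner ℝ ξ (y - x) : ℝ) ≤ ε * ‖y - x‖}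

/-- Limiting (Mordukhovich) normal cone to `Ω` at `x`. -/
def limitingNC (Ω : Set E) (x : E) : Set E :=
  {ξ | ∃ (xk ξk : ℕ → E), (∀ k, xk k ∈ Ω) ∧ Tendsto xk atTop (𝓝 x) ∧
    Tendsto ξk atTop (𝓝 ξ) ∧ ∀ k, ξk k ∈ frechetNC Ω (xk k)}

/-- Directional limiting normal cone to `Ω` at `x` in direction `u`. -/
def dirNC (Ω : Set E) (x : E) (u : E) : Set E :=
  {ξ | ∃ (tk : ℕ → ℝ) (uk ξk : ℕ → E), (∀ k, 0 < tk k) ∧ Tendsto tk atTop (𝓝 0) ∧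
    Tendsto uk atTop (𝓝 u) ∧ Tendsto ξk atTop (𝓝 ξ) ∧
    ∀ k, ξk k ∈ frechetNC Ω (x + tk k • uk k)}

/-- The product `E × F` equipped with the (Euclidean) `ℓ²`-structure. -/
abbrev P2 (E F : Type*) := WithLp 2 (E × F)

/-- Pairing constructor for `P2`. -/
def mk2 {E F : Type*} (x : E) (y : F) : P2 E F := (WithLp.equiv 2 (E × F)).symm (x, y)

/-- Graph of a single-valued mapping. -/
def graphFun (φ : E → F) : Set (P2 E F) := {p | ∃ x, p = mk2 x (φ x)}

/-- Graph of a multifunction. -/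
def graphMulti (M : E → Set F) : Set (P2 E F) := {p | ∃ x y, p = mk2 x y ∧ y ∈ M x}

/-- Graphical derivative of a single-valued mapping. -/
def gderiv (φ : E → F) (x : E) (u : E) : Set F :=
  {v | mk2 u v ∈ tangentCone (graphFun φ) (mk2 x (φ x))}

/-- Graphical derivative of a multifunction at `(x, y)`. -/
def gderivM (M : E → Set F) (x : E) (y : F) (u : E) : Set F :=
  {v | mk2 u v ∈ tangentCone (graphMulti M) (mk2 x y)}

/-- Directional limiting coderivative of a single-valued mapping:
`D*φ(x;(u,v))(η)`. -/
def dirCoderiv (φ : E → F) (x : E) (u : E) (v : F) (η : F) : Set E :=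
  {ξ | mk2 ξ (-η) ∈ dirNC (graphFun φ) (mk2 x (φ x)) (mk2 u v)}

/-- Metric subregularity of the multifunction `M` at `(x, y) ∈ Gr M` in direction `u`. -/
def DirMetrSubreg (M : E → Set F) (x : E) (y : F) (u : E) : Prop :=
  ∃ κ > (0:ℝ), ∃ V : Set E, IsDirNbhd V u ∧
    ∀ x', x' - x ∈ V → Metric.infDist x' {z | y ∈ M z} ≤ κ * Metric.infDist y (M x')

/-- Calmness of a single-valued mapping at `x` in direction `u`. -/
def DirCalm (φ : E → F) (x : E) (u : E) : Prop :=
  ∃ κ > (0:ℝ), ∃ V : Set E, IsDirNbhd V u ∧ ∀ x', x' - x ∈ V → ‖φ x' - φ x‖ ≤ κ * ‖x' - x‖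

/-- Lipschitz continuity of a single-valued mapping near `x` in direction `u`. -/
def DirLipschitz (φ : E → F) (x : E) (u : E) : Prop :=
  ∃ κ > (0:ℝ), ∃ V : Set E, IsDirNbhd V u ∧
    ∀ x₁ x₂, x₁ - x ∈ V → x₂ - x ∈ V → ‖φ x₁ - φ x₂‖ ≤ κ * ‖x₁ - x₂‖

/-- Inner semicompactness of `S` at `y` w.r.t. `Ω` in direction `v`. -/
def DirInnerSemicompact (S : F → Set E) (y : F) (Ω : Set F) (v : F) : Prop :=
  ∀ (t : ℕ → ℝ) (vk : ℕ → F), (∀ k, 0 < t k) → Tendsto t atTop (𝓝 0) →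
    Tendsto vk atTop (𝓝 v) → (∀ k, y + t k • vk k ∈ Ω) →
    ∃ (K : ℕ → ℕ) (xk : ℕ → E) (x : E), StrictMono K ∧
      (∀ k, xk k ∈ S (y + t (K k) • vk (K k))) ∧ Tendsto xk atTop (𝓝 x)

/-- Inner calmness of `S` at `(y, x) ∈ Gr S` w.r.t. `Ω` in direction `v`. -/
def DirInnerCalm (S : F → Set E) (y : F) (x : E) (Ω : Set F) (v : F) : Prop :=
  ∃ κ > (0:ℝ), ∃ V : Set F, IsDirNbhd V v ∧
    ∀ y', y' - y ∈ V → y' ∈ Ω → ∃ x' ∈ S y', ‖x - x'‖ ≤ κ * ‖y' - y‖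

/-- Epigraph of an extended-real-valued function, as a subset of `E ×₂ ℝ`. -/
def epiE (f : E → EReal) : Set (P2 E ℝ) := {p | ∃ (x : E) (α : ℝ), p = mk2 x α ∧ f x ≤ (α : EReal)}

/-- Graph of an extended-real-valued function, as a subset of `E ×₂ ℝ`. -/
def graphE (f : E → EReal) : Set (P2 E ℝ) := {p | ∃ (x : E) (α : ℝ), p = mk2 x α ∧ f x = (α : EReal)}

/-- Graphical derivative `Df(x)(h)` of an extended-real-valued function. -/
def gderivE (f : E → EReal) (x : E) (h : E) : Set ℝ :=
  {ν | mk2 h ν ∈ tangentCone (graphE f) (mk2 x (f x).toReal)}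

/-- Directional limiting subdifferential `∂f(x;(h,ν))`. -/
def dirSubdiff (f : E → EReal) (x : E) (h : E) (ν : ℝ) : Set E :=
  {ξ | mk2 ξ (-1 : ℝ) ∈ dirNC (epiE f) (mk2 x (f x).toReal) (mk2 h ν)}

/-- Directional singular limiting subdifferential `∂^∞ f(x;(h,ν))`. -/
def dirSingSubdiff (f : E → EReal) (x : E) (h : E) (ν : ℝ) : Set E :=
  {ξ | mk2 ξ (0 : ℝ) ∈ dirNC (epiE f) (mk2 x (f x).toReal) (mk2 h ν)}

/-- Fréchet (regular) subdifferential `∂̂f(x)`. -/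
def regSubdiff (f : E → EReal) (x : E) : Set E :=
  {ξ | ∀ ε > (0:ℝ), ∀ᶠ y in 𝓝 x,
    f x + ((((inner ℝ ξ (y - x) : ℝ)) - ε * ‖y - x‖ : ℝ) : EReal) ≤ f y}

/-- Analytic directional limiting subdifferential `∂ₐf(x;h)`. -/
def aDirSubdiff (f : E → EReal) (x : E) (h : E) : Set E :=
  {ξ | ∃ (t : ℕ → ℝ) (hk ξk : ℕ → E), (∀ k, 0 < t k) ∧ Tendsto t atTop (𝓝 0) ∧
    Tendsto hk atTop (𝓝 h) ∧ Tendsto ξk atTop (𝓝 ξ) ∧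
    Tendsto (fun k => f (x + t k • hk k)) atTop (𝓝 (f x)) ∧
    ∀ k, ξk k ∈ regSubdiff f (x + t k • hk k)}

/-- Domain of an extended-real-valued function. -/
def domE (f : E → EReal) : Set E := {x | f x ≠ ⊤ ∧ f x ≠ ⊥}

/-- Calmness of an extended-real-valued function at `x` in direction `h`
(understood w.r.t. its domain). -/
def DirCalmE (f : E → EReal) (x : E) (h : E) : Prop :=
  ∃ κ > (0:ℝ), ∃ V : Set E, IsDirNbhd V h ∧
    ∀ x', x' - x ∈ V → x' ∈ domE f → |(f x').toReal - (f x).toReal| ≤ κ * ‖x' - x‖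

/-- The set `N_{epi f}((x, f(x)); (h, ±∞))`; use `L = atTop` for `+∞` and `L = atBot` for `-∞`. -/
def NepiInfty (f : E → EReal) (x : E) (h : E) (L : Filter ℝ) : Set (P2 E ℝ) :=
  {q | ∃ (t νs : ℕ → ℝ) (hk : ℕ → E) (qk : ℕ → P2 E ℝ),
    (∀ k, 0 < t k) ∧ Tendsto t atTop (𝓝 0) ∧ Tendsto hk atTop (𝓝 h) ∧
    Tendsto νs atTop L ∧ Tendsto (fun k => t k * νs k) atTop (𝓝 0) ∧
    Tendsto qk atTop (𝓝 q) ∧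
    ∀ k, qk k ∈ frechetNC (epiE f) (mk2 x (f x).toReal + t k • mk2 (hk k) (νs k))}

/-- Directional differentiability: `f′(x;h) = d` as a limit over `t ↓ 0`, `h′ → h`. -/
def HasDirDeriv (f : E → EReal) (x : E) (h : E) (d : ℝ) : Prop :=
  Tendsto (fun p : ℝ × E => ((p.1⁻¹ : ℝ) : EReal) * (f (x + p.1 • p.2) - f x))
    ((𝓝[>] (0:ℝ)) ×ˢ 𝓝 h) (𝓝 (d : EReal))

abbrev Euc (n : ℕ) := EuclideanSpace ℝ (Fin n)

lemma tendsto_mk2 {ι : Type*} {l : Filter ι} {a : ι → E} {b : ι → ℝ} {a0 : E} {b0 : ℝ}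
    (ha : Tendsto a l (𝓝 a0)) (hb : Tendsto b l (𝓝 b0)) :
    Tendsto (fun k => mk2 (a k) (b k)) l (𝓝 (mk2 a0 b0)) :=
  ((WithLp.prodContinuousLinearEquiv 2 ℝ E ℝ).symm.continuous.tendsto (a0, b0)).comp
    (ha.prodMk_nhds hb)

lemma tendsto_p2_fst {ι : Type*} {l : Filter ι} {q : ι → P2 E ℝ} {q0 : P2 E ℝ}
    (h : Tendsto q l (𝓝 q0)) : Tendsto (fun k => (q k).fst) l (𝓝 q0.fst) :=
  (continuous_fst.comp (WithLp.prodContinuousLinearEquiv 2 ℝ E ℝ).continuous).continuousAt.tendsto.comp h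

lemma tendsto_p2_snd {ι : Type*} {l : Filter ι} {q : ι → P2 E ℝ} {q0 : P2 E ℝ}
    (h : Tendsto q l (𝓝 q0)) : Tendsto (fun k => (q k).snd) l (𝓝 q0.snd) :=
  (continuous_snd.comp (WithLp.prodContinuousLinearEquiv 2 ℝ E ℝ).continuous).continuousAt.tendsto.comp h

lemma p2_norm_fst_le (q : P2 E ℝ) : ‖q.fst‖ ≤ ‖q‖ := by
  have h := WithLp.prod_norm_sq_eq_of_L2 q
  nlinarith [norm_nonneg q, norm_nonneg q.fst, norm_nonneg q.snd, sq_nonneg ‖q.snd‖]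

lemma p2_norm_snd_le (q : P2 E ℝ) : ‖q.snd‖ ≤ ‖q‖ := by
  have h := WithLp.prod_norm_sq_eq_of_L2 q
  nlinarith [norm_nonneg q, norm_nonneg q.fst, norm_nonneg q.snd, sq_nonneg ‖q.fst‖]

lemma p2_norm_le_add (q : P2 E ℝ) : ‖q‖ ≤ ‖q.fst‖ + ‖q.snd‖ := by
  have h := WithLp.prod_norm_sq_eq_of_L2 q
  nlinarith [norm_nonneg q, norm_nonneg q.fst, norm_nonneg q.snd]

/-- Lemma A -/
lemma mem_frechetNC_epi_of_regSubdiff {f : E → EReal} {y : E}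
    (h1 : f y ≠ ⊤) (h2 : f y ≠ ⊥) {ξ : E} (hξ : ξ ∈ regSubdiff f y) :
    mk2 ξ (-1 : ℝ) ∈ frechetNC (epiE f) (mk2 y (f y).toReal) := by
  set α := (f y).toReal with hα
  constructor
  · exact ⟨y, α, rfl, (EReal.coe_toReal h1 h2).symm.le⟩
  · intro ε hε
    have hfst : Tendsto (fun q : P2 E ℝ => q.fst) (𝓝[epiE f] (mk2 y α)) (𝓝 y) :=
      tendsto_p2_fst (tendsto_id.mono_right nhdsWithin_le_nhds)
    have hev := hfst.eventually (hξ ε hε)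
    filter_upwards [hev, self_mem_nhdsWithin] with q hq hqepi
    obtain ⟨z, β, hzβ, hle⟩ := hqepi
    subst hzβ
    -- hq : f y + (inner ℝ ξ (z - y) - ε‖z-y‖) ≤ f z ≤ β
    have hfy : f y = ((α : ℝ) : EReal) := (EReal.coe_toReal h1 h2).symm
    rw [hfy] at hq
    have hreal : α + ((inner ℝ ξ (z - y) : ℝ) - ε * ‖z - y‖) ≤ β := by
      have := hq.trans hle
      rw [← EReal.coe_add] at this
      exact_mod_cast this
    have hinner : (inner ℝ (mk2 ξ (-1 : ℝ)) (mk2 z β - mk2 y α) : ℝ)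
        = (inner ℝ ξ (z - y) : ℝ) + (-1) * (β - α) := by
      rw [WithLp.prod_inner_apply]; simp [mk2, mul_comm]
    rw [hinner]
    have hn1 : ‖z - y‖ ≤ ‖mk2 z β - mk2 y α‖ := by
      have h' := p2_norm_fst_le (mk2 z β - mk2 y α); exact h'
    have := mul_le_mul_of_nonneg_left hn1 hε.le
    nlinarith

lemma mk2_fst {a : E} {b : ℝ} : (mk2 a b).fst = a := rfl
lemma mk2_snd {a : E} {b : ℝ} : (mk2 a b).snd = b := rfl

/-- Lemma B -/
lemma frechetNC_epi_elim {f : E → EReal} {y : E} {α : ℝ} {ξ : E} {η : ℝ} (hη : η < 0)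
    (h : mk2 ξ η ∈ frechetNC (epiE f) (mk2 y α)) :
    f y = (α : EReal) ∧ (-η)⁻¹ • ξ ∈ regSubdiff f y := by
  obtain ⟨hmem, hineq⟩ := h
  have hfyle : f y ≤ (α : EReal) := by
    obtain ⟨y', α', hp, hle⟩ := hmem
    have h1 : y = y' := congrArg (fun q : P2 E ℝ => q.fst) hp
    have h2 : α = α' := congrArg (fun q : P2 E ℝ => q.snd) hp
    rw [h1, h2]; exact hle
  have hfyα : f y = (α : EReal) := by
    by_contra hne
    have hlt : f y < (α : EReal) := lt_of_le_of_ne hfyle hne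
    -- find τ > 0 with f y ≤ α - τ
    obtain ⟨τ, hτ0, hτ⟩ : ∃ τ > (0:ℝ), f y ≤ ((α - τ : ℝ) : EReal) := by
      rcases eq_or_ne (f y) ⊥ with hB | hB
      · exact ⟨1, one_pos, by rw [hB]; exact bot_le⟩
      · have hT : f y ≠ ⊤ := fun hT => by rw [hT] at hlt; exact (not_top_lt hlt)
        have hfy : f y = ((f y).toReal : EReal) := (EReal.coe_toReal hT hB).symm
        have htR : (f y).toReal < α := by rw [hfy] at hlt; exact_mod_cast hlt
        refine ⟨(α - (f y).toReal) / 2, by linarith, ?_⟩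
        calc f y = ((f y).toReal : EReal) := hfy
          _ ≤ _ := EReal.coe_le_coe_iff.mpr (by linarith)
    -- sequence approaching (y, α) inside the epigraph from below
    set s : ℕ → ℝ := fun k => τ * (1 / (k + 1 : ℝ)) with hs
    have hs0 : ∀ k, 0 < s k := fun k => by positivity
    have hsτ : ∀ k, s k ≤ τ := by
      intro k
      have h1 : (1 : ℝ) / (k + 1 : ℝ) ≤ 1 := by
        rw [div_le_one (by positivity)]; linarith [Nat.cast_nonneg (α := ℝ) k]
      calc s k = τ * (1 / (k + 1 : ℝ)) := rfl
        _ ≤ τ * 1 := mul_le_mul_of_nonneg_left h1 hτ0.le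
        _ = τ := mul_one τ
    have hstend : Tendsto s atTop (𝓝 0) := by
      have h' := tendsto_one_div_add_atTop_nhds_zero_nat.const_mul τ
      rw [mul_zero] at h'
      exact h'
    set q : ℕ → P2 E ℝ := fun k => mk2 y (α - s k) with hq
    have hqepi : ∀ k, q k ∈ epiE f := by
      intro k
      refine ⟨y, α - s k, rfl, ?_⟩
      refine hτ.trans ?_
      exact EReal.coe_le_coe_iff.mpr (by linarith [hsτ k])
    have hqt : Tendsto q atTop (𝓝[epiE f] (mk2 y α)) := by
      apply tendsto_nhdsWithin_of_tendsto_nhds_of_eventually_within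
      · have : Tendsto (fun k => α - s k) atTop (𝓝 (α - 0)) := tendsto_const_nhds.sub hstend
        rw [sub_zero] at this
        exact tendsto_mk2 tendsto_const_nhds this
      · exact Eventually.of_forall hqepi
    have hev := hqt.eventually (hineq (-η/2) (by linarith))
    obtain ⟨k, hk⟩ := hev.exists
    have hform : (inner ℝ (mk2 ξ η) (q k - mk2 y α) : ℝ) = (inner ℝ ξ (y - y) : ℝ) + η * (α - s k - α) := by
      rw [WithLp.prod_inner_apply]; simp [hq, mk2, mul_comm]
    rw [hform] at hk
    have hnorm : ‖q k - mk2 y α‖ ≤ s k := by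
      have h' := p2_norm_le_add (q k - mk2 y α)
      have h1 : (q k - mk2 y α).fst = y - y := rfl
      have h2 : (q k - mk2 y α).snd = α - s k - α := rfl
      rw [h1, h2] at h'
      simp only [sub_self, norm_zero, zero_add, Real.norm_eq_abs] at h'
      calc ‖q k - mk2 y α‖ ≤ |α - s k - α| := h'
        _ = s k := by rw [show α - s k - α = -(s k) by ring, abs_neg, abs_of_pos (hs0 k)]
    simp only [sub_self, inner_zero_right, zero_add] at hk
    have hb : (-η/2) * ‖q k - mk2 y α‖ ≤ (-η/2) * s k :=
      mul_le_mul_of_nonneg_left hnorm (by linarith)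
    nlinarith [hs0 k]
  refine ⟨hfyα, ?_⟩
  intro ε hε
  set c : ℝ := -η with hc
  have hc0 : 0 < c := by simp [hc]; linarith
  set ξ' : E := c⁻¹ • ξ with hξ'
  set C : ℝ := ‖ξ'‖ + ε + 1 with hC
  have hC0 : 0 < 1 + C := by positivity
  have hε' : 0 < c * ε / (2 * (1 + C)) := by positivity
  obtain ⟨δ, hδ0, hδ⟩ : ∃ δ > 0, ∀ q ∈ epiE f, dist q (mk2 y α) < δ →
      (inner ℝ (mk2 ξ η) (q - mk2 y α) : ℝ) ≤ (c * ε / (2 * (1 + C))) * ‖q - mk2 y α‖ := by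
    have hev := hineq _ hε'
    rw [Filter.eventually_iff, Metric.mem_nhdsWithin_iff] at hev
    obtain ⟨δ, hδ0, hδ⟩ := hev
    exact ⟨δ, hδ0, fun q hq hd => hδ ⟨Metric.mem_ball.mpr hd, hq⟩⟩
  rw [Metric.eventually_nhds_iff]
  refine ⟨δ / (1 + C), by positivity, ?_⟩
  intro z hz
  by_cases hzy : z = y
  · subst hzy; simp [sub_self]
  by_cases hT : f z = ⊤
  · rw [hT]; exact le_top
  set r : ℝ := (inner ℝ ξ' (z - y) : ℝ) - ε * ‖z - y‖ with hr
  rw [hfyα, ← EReal.coe_add]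
  by_contra hcon
  rw [not_le] at hcon
  have hcon' : f z < ((α + r : ℝ) : EReal) := hcon
  have hzy' : 0 < ‖z - y‖ := by
    rw [norm_pos_iff, sub_ne_zero]; exact hzy
  obtain ⟨β, hβ1, hβ2, hβ3⟩ : ∃ β : ℝ, f z ≤ (β : EReal) ∧ β ≤ α + r ∧ α + r - β ≤ ‖z - y‖ := by
    rcases eq_or_ne (f z) ⊥ with hB | hB
    · exact ⟨α + r - ‖z - y‖, by rw [hB]; exact bot_le, by linarith, by linarith⟩
    · have hfz : f z = ((f z).toReal : EReal) := (EReal.coe_toReal hT hB).symm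
      have htR : (f z).toReal < α + r := by rw [hfz] at hcon'; exact_mod_cast hcon'
      refine ⟨max (f z).toReal (α + r - ‖z - y‖), ?_, ?_, ?_⟩
      · rw [hfz]; exact_mod_cast le_max_left _ _
      · exact max_le htR.le (by linarith)
      · have := le_max_right (f z).toReal (α + r - ‖z - y‖); linarith
  have hCS : (inner ℝ ξ' (z - y) : ℝ) ≤ ‖ξ'‖ * ‖z - y‖ := real_inner_le_norm _ _
  have hCS2 : -(‖ξ'‖ * ‖z - y‖) ≤ (inner ℝ ξ' (z - y) : ℝ) :=
    neg_le_of_abs_le (abs_real_inner_le_norm _ _)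
  have hβα : |β - α| ≤ C * ‖z - y‖ := by
    rw [abs_le]; constructor
    · simp only [hC]; nlinarith
    · simp only [hC]; nlinarith
  have hqnorm : ‖mk2 z β - mk2 y α‖ ≤ (1 + C) * ‖z - y‖ := by
    have h' := p2_norm_le_add (mk2 z β - mk2 y α)
    have h1 : (mk2 z β - mk2 y α).fst = z - y := rfl
    have h2 : (mk2 z β - mk2 y α).snd = β - α := rfl
    rw [h1, h2, Real.norm_eq_abs] at h'
    nlinarith
  have hqdist : dist (mk2 z β) (mk2 y α) < δ := by
    rw [dist_eq_norm]
    have hzd : ‖z - y‖ < δ / (1 + C) := by rw [← dist_eq_norm]; exact hz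
    calc ‖mk2 z β - mk2 y α‖ ≤ (1 + C) * ‖z - y‖ := hqnorm
      _ < (1 + C) * (δ / (1 + C)) := by exact mul_lt_mul_of_pos_left hzd hC0
      _ = δ := by field_simp
  have hkey := hδ (mk2 z β) ⟨z, β, rfl, hβ1⟩ hqdist
  have hform : (inner ℝ (mk2 ξ η) (mk2 z β - mk2 y α) : ℝ)
      = (inner ℝ ξ (z - y) : ℝ) + η * (β - α) := by
    rw [WithLp.prod_inner_apply]; simp [mk2, mul_comm]
  rw [hform] at hkey
  have hinner : (inner ℝ ξ (z - y) : ℝ) = c * (inner ℝ ξ' (z - y) : ℝ) := by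
    rw [hξ', real_inner_smul_left, ← mul_assoc, mul_inv_cancel₀ hc0.ne', one_mul]
  have hrhs : (c * ε / (2 * (1 + C))) * ‖mk2 z β - mk2 y α‖
      ≤ (c * ε / 2) * ‖z - y‖ := by
    have := mul_le_mul_of_nonneg_left hqnorm hε'.le
    calc (c * ε / (2 * (1 + C))) * ‖mk2 z β - mk2 y α‖
        ≤ (c * ε / (2 * (1 + C))) * ((1 + C) * ‖z - y‖) := this
      _ = (c * ε / 2) * ‖z - y‖ := by field_simp
  have hηc : η = -c := by simp [hc]
  rw [hinner, hηc] at hkey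
  -- hkey : c * ⟪ξ', z-y⟫ + (-c) * (β - α) ≤ ε' * ‖q - p‖ ≤ (cε/2)‖z-y‖
  have hlb : c * ε * ‖z - y‖ ≤ c * (inner ℝ ξ' (z - y) : ℝ) + (-c) * (β - α) := by
    have h1 : (inner ℝ ξ' (z - y) : ℝ) = r + ε * ‖z - y‖ := by rw [hr]; ring
    nlinarith
  have hfin : c * ε * ‖z - y‖ ≤ c * ε / 2 * ‖z - y‖ := hlb.trans (hkey.trans hrhs)
  have hpos : 0 < c * ε * ‖z - y‖ := mul_pos (mul_pos hc0 hε) hzy'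
  nlinarith [hfin, hpos]


lemma aDirSubdiff_to_union {f : E → EReal} {x : E}
    (hfin1 : f x ≠ ⊤) (hfin2 : f x ≠ ⊥) {h : E} (hcalm : DirCalmE f x h) {ξ : E}
    (hξ : ξ ∈ aDirSubdiff f x h) : ∃ ν ∈ gderivE f x h, ξ ∈ dirSubdiff f x h ν := by
  obtain ⟨t, hk, ξk, ht0, ht, hhk, hξk, hfval, hreg⟩ := hξ
  obtain ⟨κ, hκ, V, ⟨ρ, hρ, δ, hδ, hV⟩, hcal⟩ := hcalm
  -- eventual finiteness
  have hopen : IsOpen {z : EReal | z ≠ ⊤ ∧ z ≠ ⊥} := by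
    have : {z : EReal | z ≠ ⊤ ∧ z ≠ ⊥} = ({⊤} : Set EReal)ᶜ ∩ ({⊥} : Set EReal)ᶜ := by
      ext z; simp [mem_compl_iff]
    rw [this]
    exact (isClosed_singleton.isOpen_compl).inter (isClosed_singleton.isOpen_compl)
  have hdom : ∀ᶠ k in atTop, f (x + t k • hk k) ≠ ⊤ ∧ f (x + t k • hk k) ≠ ⊥ :=
    hfval (hopen.mem_nhds ⟨hfin1, hfin2⟩)
  -- eventual membership in the directional neighborhood
  have hnorm_t : Tendsto (fun k => ‖t k • hk k‖) atTop (𝓝 0) := by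
    have h' : Tendsto (fun k => |t k| * ‖hk k‖) atTop (𝓝 (|0| * ‖h‖)) :=
      ht.abs.mul hhk.norm
    rw [abs_zero, zero_mul] at h'
    exact h'.congr fun k => (norm_smul _ _).symm
  have hVev : ∀ᶠ k in atTop, t k • hk k ∈ dirNbhdBase h ρ δ := by
    have hcond1 : ∀ᶠ k in atTop, ‖t k • hk k‖ ≤ ρ :=
      (hnorm_t.eventually_lt_const hρ).mono fun k hk' => hk'.le
    have hcond2 : ∀ᶠ k in atTop,
        ‖‖h‖ • (t k • hk k) - ‖t k • hk k‖ • h‖ ≤ δ * ‖t k • hk k‖ * ‖h‖ := by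
      rcases eq_or_ne h 0 with h0 | h0
      · refine Eventually.of_forall fun k => ?_
        simp [h0]
      · have hg : Tendsto (fun k => δ * ‖hk k‖ * ‖h‖ - ‖‖h‖ • hk k - ‖hk k‖ • h‖)
            atTop (𝓝 (δ * ‖h‖ * ‖h‖ - ‖‖h‖ • h - ‖h‖ • h‖)) := by
          exact ((tendsto_const_nhds.mul hhk.norm).mul tendsto_const_nhds).sub
            (((tendsto_const_nhds.smul hhk).sub (hhk.norm.smul tendsto_const_nhds)).norm)
        have hpos : (0:ℝ) < δ * ‖h‖ * ‖h‖ - ‖‖h‖ • h - ‖h‖ • h‖ := by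
          rw [sub_self, norm_zero, sub_zero]
          have : 0 < ‖h‖ := norm_pos_iff.mpr h0
          positivity
        refine (hg.eventually_const_lt hpos).mono fun k hk' => ?_
        have h1 : ‖‖h‖ • hk k - ‖hk k‖ • h‖ ≤ δ * ‖hk k‖ * ‖h‖ := by linarith
        have h2 : ‖t k • hk k‖ = t k * ‖hk k‖ := by
          rw [norm_smul, Real.norm_eq_abs, abs_of_pos (ht0 k)]
        have h3 : ‖h‖ • (t k • hk k) - ‖t k • hk k‖ • h
            = t k • (‖h‖ • hk k - ‖hk k‖ • h) := by
          rw [smul_sub, smul_comm, h2, mul_smul]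
        rw [h3, norm_smul, Real.norm_eq_abs, abs_of_pos (ht0 k), h2]
        calc t k * ‖‖h‖ • hk k - ‖hk k‖ • h‖ ≤ t k * (δ * ‖hk k‖ * ‖h‖) :=
              mul_le_mul_of_nonneg_left h1 (ht0 k).le
          _ = δ * (t k * ‖hk k‖) * ‖h‖ := by ring
    filter_upwards [hcond1, hcond2] with k h1 h2
    exact ⟨h1, h2⟩
  -- eventual bound on norms
  have hnb : ∀ᶠ k in atTop, κ * ‖hk k‖ ≤ κ * ‖h‖ + 1 := by
    have h' : Tendsto (fun k => κ * ‖hk k‖) atTop (𝓝 (κ * ‖h‖)) :=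
      tendsto_const_nhds.mul hhk.norm
    exact (h'.eventually_lt_const (lt_add_one _)).mono fun k hk' => hk'.le
  obtain ⟨N, hN⟩ := eventually_atTop.mp ((hdom.and hVev).and hnb)
  -- shifted sequences
  set T : ℕ → ℝ := fun k => t (k + N) with hTdef
  set H : ℕ → E := fun k => hk (k + N) with hHdef
  set Ξ : ℕ → E := fun k => ξk (k + N) with hΞdef
  have hT0 : ∀ k, 0 < T k := fun k => ht0 _
  have hT : Tendsto T atTop (𝓝 0) := ht.comp (tendsto_add_atTop_nat N)
  have hH : Tendsto H atTop (𝓝 h) := hhk.comp (tendsto_add_atTop_nat N)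
  have hΞ : Tendsto Ξ atTop (𝓝 ξ) := hξk.comp (tendsto_add_atTop_nat N)
  have hP : ∀ k, (f (x + T k • H k) ≠ ⊤ ∧ f (x + T k • H k) ≠ ⊥) ∧
      T k • H k ∈ dirNbhdBase h ρ δ ∧ κ * ‖H k‖ ≤ κ * ‖h‖ + 1 := by
    intro k
    obtain ⟨⟨hd, hv⟩, hb⟩ := hN (k + N) (Nat.le_add_left N k)
    exact ⟨hd, hv, hb⟩
  set ν : ℕ → ℝ := fun k => ((f (x + T k • H k)).toReal - (f x).toReal) / T k with hνdef
  have hkey : ∀ k, f (x + T k • H k) = (((f x).toReal + T k * ν k : ℝ) : EReal) := by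
    intro k
    have hd := (hP k).1
    have harith : (f x).toReal + T k * ν k = (f (x + T k • H k)).toReal := by
      rw [hνdef, mul_div_assoc', mul_comm, mul_div_assoc, div_self (hT0 k).ne', mul_one]
      ring
    rw [harith, EReal.coe_toReal hd.1 hd.2]
  have hbound : ∀ k, |ν k| ≤ κ * ‖h‖ + 1 := by
    intro k
    have hd := (hP k).1
    have hc := hcal (x + T k • H k) (by rw [add_sub_cancel_left]; exact hV (hP k).2.1) ⟨hd.1, hd.2⟩
    rw [add_sub_cancel_left, norm_smul, Real.norm_eq_abs, abs_of_pos (hT0 k)] at hc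
    have : |ν k| ≤ κ * (T k * ‖H k‖) / T k := by
      rw [hνdef, abs_div, abs_of_pos (hT0 k)]
      exact div_le_div_of_nonneg_right hc (hT0 k).le |>.trans (le_of_eq rfl)
    rw [mul_comm (T k) ‖H k‖, ← mul_assoc, mul_div_assoc, div_self (hT0 k).ne', mul_one] at this
    exact this.trans (hP k).2.2
  -- Bolzano–Weierstrass
  obtain ⟨nu0, -, K, hK, hνK⟩ := tendsto_subseq_of_bounded
    (Metric.isBounded_Icc (-(κ * ‖h‖ + 1)) (κ * ‖h‖ + 1))
    (fun k => Set.mem_Icc.mpr (abs_le.mp (hbound k)))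
  have hTK : Tendsto (fun k => T (K k)) atTop (𝓝 0) := hT.comp hK.tendsto_atTop
  have hHK : Tendsto (fun k => H (K k)) atTop (𝓝 h) := hH.comp hK.tendsto_atTop
  have hΞK : Tendsto (fun k => Ξ (K k)) atTop (𝓝 ξ) := hΞ.comp hK.tendsto_atTop
  refine ⟨nu0, ?_, ?_⟩
  · exact ⟨fun k => mk2 (H (K k)) (ν (K k)), fun k => T (K k),
      tendsto_mk2 hHK hνK, fun k => hT0 _, hTK,
      fun k => ⟨x + T (K k) • H (K k), (f x).toReal + T (K k) * ν (K k), rfl, hkey _⟩⟩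
  · refine ⟨fun k => T (K k), fun k => mk2 (H (K k)) (ν (K k)),
      fun k => mk2 (Ξ (K k)) (-1 : ℝ), fun k => hT0 _, hTK,
      tendsto_mk2 hHK hνK, tendsto_mk2 hΞK tendsto_const_nhds, ?_⟩
    intro k
    have hd := (hP (K k)).1
    have h2 : (f (x + T (K k) • H (K k))).toReal = (f x).toReal + T (K k) * ν (K k) := by
      rw [hkey, EReal.toReal_coe]
    have hA := mem_frechetNC_epi_of_regSubdiff hd.1 hd.2 (hreg (K k + N))
    rw [h2] at hA
    exact hA

lemma dirSubdiff_to_aDirSubdiff {f : E → EReal} {x : E}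
    (hfin1 : f x ≠ ⊤) (hfin2 : f x ≠ ⊥) {h : E} {ν : ℝ} {ξ : E}
    (hξ : ξ ∈ dirSubdiff f x h ν) : ξ ∈ aDirSubdiff f x h := by
  obtain ⟨tk, uk, ζk, ht0, ht, hu, hζ, hfr⟩ := hξ
  have hE : Tendsto (fun k => (ζk k).snd) atTop (𝓝 (-1 : ℝ)) := tendsto_p2_snd hζ
  have hEneg : ∀ᶠ k in atTop, (ζk k).snd < 0 :=
    hE.eventually_lt_const (by norm_num : (-1:ℝ) < 0)
  obtain ⟨N, hN⟩ := eventually_atTop.mp hEneg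
  have helim : ∀ k, (ζk k).snd < 0 →
      f (x + tk k • (uk k).fst) = (((f x).toReal + tk k * (uk k).snd : ℝ) : EReal) ∧
      (-(ζk k).snd)⁻¹ • (ζk k).fst ∈ regSubdiff f (x + tk k • (uk k).fst) := by
    intro k hneg
    have hfr' : mk2 (ζk k).fst (ζk k).snd ∈ frechetNC (epiE f)
        (mk2 (x + tk k • (uk k).fst) ((f x).toReal + tk k * (uk k).snd)) := hfr k
    exact frechetNC_epi_elim hneg hfr'
  -- shifted sequences
  set T : ℕ → ℝ := fun k => tk (k + N) with hT
  set H : ℕ → E := fun k => (uk (k + N)).fst with hH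
  set Ξ : ℕ → E := fun k => (-(ζk (k + N)).snd)⁻¹ • (ζk (k + N)).fst with hΞ
  have hHt : Tendsto H atTop (𝓝 h) := (tendsto_p2_fst hu).comp (tendsto_add_atTop_nat N)
  have hNt : Tendsto (fun k => (uk (k + N)).snd) atTop (𝓝 ν) :=
    (tendsto_p2_snd hu).comp (tendsto_add_atTop_nat N)
  have hΞt : Tendsto Ξ atTop (𝓝 ξ) := by
    have h1 : Tendsto (fun k => (-(ζk k).snd)⁻¹ • (ζk k).fst) atTop (𝓝 ((-(-1:ℝ))⁻¹ • ξ)) :=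
      ((hE.neg).inv₀ (by norm_num)).smul (tendsto_p2_fst hζ)
    rw [show ((-(-1:ℝ))⁻¹ • ξ) = ξ by norm_num] at h1
    exact h1.comp (tendsto_add_atTop_nat N)
  refine ⟨T, H, Ξ, fun k => ht0 _, ht.comp (tendsto_add_atTop_nat N), hHt, hΞt, ?_, ?_⟩
  · have heq : ∀ k, f (x + T k • H k) = (((f x).toReal + T k * (uk (k + N)).snd : ℝ) : EReal) :=
      fun k => (helim (k + N) (hN _ (Nat.le_add_left N k))).1
    have hco : Tendsto (fun k => ((f x).toReal + T k * (uk (k + N)).snd : ℝ)) atTop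
        (𝓝 ((f x).toReal + 0 * ν)) :=
      tendsto_const_nhds.add ((ht.comp (tendsto_add_atTop_nat N)).mul hNt)
    rw [zero_mul, add_zero] at hco
    have := (EReal.tendsto_coe (a := (f x).toReal)).mpr hco
    rw [EReal.coe_toReal hfin1 hfin2] at this
    exact Tendsto.congr (fun k => (heq k).symm) this
  · exact fun k => (helim (k + N) (hN _ (Nat.le_add_left N k))).2

lemma isOpen_finiteE : IsOpen {z : EReal | z ≠ ⊤ ∧ z ≠ ⊥} := by
  have : {z : EReal | z ≠ ⊤ ∧ z ≠ ⊥} = ({⊤} : Set EReal)ᶜ ∩ ({⊥} : Set EReal)ᶜ := by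
    ext z; simp [mem_compl_iff]
  rw [this]
  exact (isClosed_singleton.isOpen_compl).inter (isClosed_singleton.isOpen_compl)

lemma hasDirDeriv_mem_gderivE {f : E → EReal} {x : E} (hfin1 : f x ≠ ⊤) (hfin2 : f x ≠ ⊥)
    {h : E} {d : ℝ} (hd : HasDirDeriv f x h d) : d ∈ gderivE f x h := by
  have hfx : f x = ((f x).toReal : EReal) := (EReal.coe_toReal hfin1 hfin2).symm
  set frx := (f x).toReal with hfrx
  set t : ℕ → ℝ := fun k => 1 / (k + 1 : ℝ) with htdef
  have ht0 : ∀ k, 0 < t k := fun k => by positivity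
  have htt : Tendsto t atTop (𝓝 0) := tendsto_one_div_add_atTop_nhds_zero_nat
  have hseq : Tendsto (fun k : ℕ => (t k, h)) atTop ((𝓝[>] (0:ℝ)) ×ˢ 𝓝 h) :=
    (tendsto_nhdsWithin_of_tendsto_nhds_of_eventually_within _ htt
      (Eventually.of_forall fun k => ht0 k)).prodMk tendsto_const_nhds
  have hcomp : Tendsto (fun k => (((t k)⁻¹ : ℝ) : EReal) * (f (x + t k • h) - f x))
      atTop (𝓝 (d : EReal)) := hd.comp hseq
  have hfinev : ∀ᶠ k in atTop, f (x + t k • h) ≠ ⊤ ∧ f (x + t k • h) ≠ ⊥ := by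
    have hval := hcomp.eventually
      (isOpen_finiteE.mem_nhds ⟨EReal.coe_ne_top d, EReal.coe_ne_bot d⟩)
    refine hval.mono fun k hk => ⟨?_, ?_⟩
    · intro hT
      apply hk.1
      rw [hT, hfx, EReal.top_sub_coe, EReal.coe_mul_top_of_pos (inv_pos.mpr (ht0 k))]
    · intro hB
      apply hk.2
      rw [hB, EReal.bot_sub, EReal.coe_mul_bot_of_pos (inv_pos.mpr (ht0 k))]
  obtain ⟨N, hN⟩ := eventually_atTop.mp hfinev
  set T : ℕ → ℝ := fun k => t (k + N) with hTdef
  have hT0 : ∀ k, 0 < T k := fun k => ht0 _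
  have hTt : Tendsto T atTop (𝓝 0) := htt.comp (tendsto_add_atTop_nat N)
  set ν : ℕ → ℝ := fun k => ((f (x + T k • h)).toReal - frx) / T k with hνdef
  have hkey : ∀ k, f (x + T k • h) = ((frx + T k * ν k : ℝ) : EReal) := by
    intro k
    have hdm := hN (k + N) (Nat.le_add_left N k)
    have harith : frx + T k * ν k = (f (x + T k • h)).toReal := by
      rw [hνdef, mul_div_assoc', mul_comm, mul_div_assoc, div_self (hT0 k).ne', mul_one]
      ring
    rw [harith, EReal.coe_toReal hdm.1 hdm.2]
  have hνd : Tendsto ν atTop (𝓝 d) := by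
    have hFT : Tendsto (fun k => (((T k)⁻¹ : ℝ) : EReal) * (f (x + T k • h) - f x))
        atTop (𝓝 (d : EReal)) := hcomp.comp (tendsto_add_atTop_nat N)
    have hvals : ∀ k, (((T k)⁻¹ : ℝ) : EReal) * (f (x + T k • h) - f x) = ((ν k : ℝ) : EReal) := by
      intro k
      rw [hkey k, hfx, ← EReal.coe_sub, ← EReal.coe_mul]
      congr 1
      rw [add_sub_cancel_left, inv_mul_cancel_left₀ (hT0 k).ne']
    rw [tendsto_congr hvals] at hFT
    exact EReal.tendsto_coe.mp hFT
  exact ⟨fun k => mk2 h (ν k), T, tendsto_mk2 tendsto_const_nhds hνd, hT0, hTt,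
    fun k => ⟨x + T k • h, frx + T k * ν k, rfl, hkey k⟩⟩

lemma eq_of_mem_gderivE_of_hasDirDeriv {f : E → EReal} {x : E}
    (hfin1 : f x ≠ ⊤) (hfin2 : f x ≠ ⊥) {h : E} {d : ℝ} (hd : HasDirDeriv f x h d)
    {ν : ℝ} (hν : ν ∈ gderivE f x h) : ν = d := by
  have hfx : f x = ((f x).toReal : EReal) := (EReal.coe_toReal hfin1 hfin2).symm
  set frx := (f x).toReal with hfrx
  obtain ⟨uk, tk, huk, ht0, htk, hmem⟩ := hν
  have hHt : Tendsto (fun k => (uk k).fst) atTop (𝓝 h) := tendsto_p2_fst huk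
  have hNt : Tendsto (fun k => (uk k).snd) atTop (𝓝 ν) := tendsto_p2_snd huk
  have heq : ∀ k, f (x + tk k • (uk k).fst) = ((frx + tk k * (uk k).snd : ℝ) : EReal) := by
    intro k
    obtain ⟨x', α, hp, hfeq⟩ := hmem k
    have h1 : x + tk k • (uk k).fst = x' := congrArg (fun q : P2 E ℝ => q.fst) hp
    have h2 : frx + tk k * (uk k).snd = α := congrArg (fun q : P2 E ℝ => q.snd) hp
    rw [h1, h2]; exact hfeq
  have hseq : Tendsto (fun k => (tk k, (uk k).fst)) atTop ((𝓝[>] (0:ℝ)) ×ˢ 𝓝 h) :=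
    (tendsto_nhdsWithin_of_tendsto_nhds_of_eventually_within _ htk
      (Eventually.of_forall fun k => ht0 k)).prodMk hHt
  have hcomp : Tendsto (fun k => (((tk k)⁻¹ : ℝ) : EReal) * (f (x + tk k • (uk k).fst) - f x))
      atTop (𝓝 (d : EReal)) := hd.comp hseq
  have hvals : ∀ k, (((tk k)⁻¹ : ℝ) : EReal) * (f (x + tk k • (uk k).fst) - f x)
      = (((uk k).snd : ℝ) : EReal) := by
    intro k
    rw [heq k, hfx, ← EReal.coe_sub, ← EReal.coe_mul]
    congr 1
    rw [add_sub_cancel_left, inv_mul_cancel_left₀ (ht0 k).ne']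
  rw [tendsto_congr hvals] at hcomp
  exact tendsto_nhds_unique hNt (EReal.tendsto_coe.mp hcomp)

/-- **Corollary 4.1.** Under directional calmness, the analytic directional limiting
subdifferential equals the union over graphical-derivative values of the directional limiting
subdifferentials; under directional differentiability it is a single one. -/
theorem aDirSubdiff_of_calm {n : ℕ} (f : Euc n → EReal) (x : Euc n)
    (hfin : f x ≠ ⊤ ∧ f x ≠ ⊥) (h : Euc n) (hcalm : DirCalmE f x h) :
    (aDirSubdiff f x h = ⋃ ν ∈ gderivE f x h, dirSubdiff f x h ν) ∧
    (aDirSubdiff f x h = {ξ : Euc n | ∃ ν ∈ gderivE f x h,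
      mk2 ξ (-1 : ℝ) ∈ dirNC (epiE f) (mk2 x (f x).toReal) (mk2 h ν)}) ∧
    (∀ d : ℝ, HasDirDeriv f x h d →
      gderivE f x h = {d} ∧ aDirSubdiff f x h = dirSubdiff f x h d) := by
  have hpart1 : aDirSubdiff f x h = ⋃ ν ∈ gderivE f x h, dirSubdiff f x h ν := by
    ext ξ
    simp only [mem_iUnion, exists_prop]
    constructor
    · exact aDirSubdiff_to_union hfin.1 hfin.2 hcalm
    · rintro ⟨ν, -, hξ⟩
      exact dirSubdiff_to_aDirSubdiff hfin.1 hfin.2 hξ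
  refine ⟨hpart1, ?_, ?_⟩
  · rw [hpart1]
    ext ξ
    simp only [mem_iUnion, exists_prop, mem_setOf_eq]
    rfl
  · intro d hd
    have hgd : gderivE f x h = {d} := by
      apply Set.Subset.antisymm
      · intro ν hν
        exact eq_of_mem_gderivE_of_hasDirDeriv hfin.1 hfin.2 hd hν
      · intro ν hν
        rw [Set.mem_singleton_iff] at hν
        subst hν
        exact hasDirDeriv_mem_gderivE hfin.1 hfin.2 hd
    refine ⟨hgd, ?_⟩
    rw [hpart1, hgd]
    simp

end Paper
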